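/- Let $n\ge 1$ and let $(T_{ijk})_{1\le i,j,k\le n}$ be a family of real numbers that is fully symmetric in all three indices (Codazzi symmetry). Set $H_k=\sum_i T_{iik}$. Then $(1+\tfrac{2}{n+1})\sum_k(\sum_i \lambda_i T_{iik})^2/(\sum_i\lambda_i^2) \le \sum_{i,j,k}T_{ijk}^2 + \tfrac{2n}{n+1}\sum_k H_k^2$ whenever $\sum_i\lambda_i^2>0$, where $(\lambda_i)$ are arbitrary reals. More precisely, with $D_k := \sum_i \lambda_i T_{iik}$ and $|Z|^2=\sum_i\lambda_i^2$, one has $(1+\tfrac{2}{n+1})\,\frac{\sum_k D_k^2}{|Z|^2} \le \sum_{i,j,k}T_{ijk}^2 + \tfrac{2n}{n+1}\sum_k H_k^2$. -/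

import Mathlib

open Finset

set_option maxHeartbeats 1600000

/-- Lemma 2.4, inequality (2.15): algebraic estimate for a fully symmetric
(Codazzi) tensor `T`, with `H k = ∑ i, T i i k` and `D k = ∑ i, lam i * T i i k`. -/
theorem stmt_1 (n : ℕ) (hn : 1 ≤ n) (T : Fin n → Fin n → Fin n → ℝ)
    (hsymm : ∀ i j k, T i j k = T j i k) (hsymm' : ∀ i j k, T i j k = T i k j)
    (lam : Fin n → ℝ) (hZ : 0 < ∑ i, lam i ^ 2) :
    (1 + 2 / ((n : ℝ) + 1)) * ((∑ k, (∑ i, lam i * T i i k) ^ 2) / (∑ i, lam i ^ 2)) ≤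
      (∑ k, ∑ i, ∑ j, T i j k ^ 2) +
        (2 * (n : ℝ) / ((n : ℝ) + 1)) * ∑ k, (∑ i, T i i k) ^ 2 := by
  have hc : (1:ℝ) ≤ (n:ℝ) := by exact_mod_cast hn
  set c : ℝ := (n:ℝ) with hcdef
  set S : ℝ := ∑ k, ∑ i, ∑ j, T i j k ^ 2 with hS
  set P : ℝ := ∑ k, T k k k ^ 2 with hP
  set Bs : ℝ := ∑ k, ∑ i ∈ univ.erase k, T i i k ^ 2 with hBs
  set Hs : ℝ := ∑ k, (∑ i, T i i k) ^ 2 with hHs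
  set A : ℝ := ∑ k, ∑ i, T i i k ^ 2 with hA
  have hBnonneg : (0:ℝ) ≤ Bs := by positivity
  have hHnonneg : (0:ℝ) ≤ Hs := by positivity
  -- A = P + Bs
  have hAPB : A = P + Bs := by
    rw [hA, hP, hBs, ← Finset.sum_add_distrib]
    apply Finset.sum_congr rfl
    intro k _
    rw [← Finset.add_sum_erase _ _ (Finset.mem_univ k)]
  -- Step 1: Cauchy-Schwarz
  have step1 : (∑ k, (∑ i, lam i * T i i k) ^ 2) / (∑ i, lam i ^ 2) ≤ A := by
    rw [div_le_iff₀ hZ]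
    calc ∑ k, (∑ i, lam i * T i i k) ^ 2
        ≤ ∑ k, ((∑ i, lam i ^ 2) * ∑ i, T i i k ^ 2) := by
          apply Finset.sum_le_sum
          intro k _
          exact Finset.sum_mul_sq_le_sq_mul_sq univ lam (fun i => T i i k)
      _ = A * (∑ i, lam i ^ 2) := by
          rw [hA, Finset.sum_mul]
          apply Finset.sum_congr rfl
          intro k _; ring
  -- relabeling identity
  have relabel : ∀ g : Fin n → Fin n → ℝ,
      (∑ k, ∑ i ∈ univ.erase k, g k i) = ∑ k, ∑ i ∈ univ.erase k, g i k := by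
    intro g
    have h1 : ∀ k : Fin n, (∑ i ∈ univ.erase k, g k i) = (∑ i, g k i) - g k k := by
      intro k; rw [Finset.sum_erase_eq_sub (Finset.mem_univ k)]
    have h2 : ∀ k : Fin n, (∑ i ∈ univ.erase k, g i k) = (∑ i, g i k) - g k k := by
      intro k; rw [Finset.sum_erase_eq_sub (Finset.mem_univ k)]
    simp only [h1, h2, Finset.sum_sub_distrib]
    rw [Finset.sum_comm]
  -- Step 2: S ≥ P + 3 Bs
  have step2 : P + 3 * Bs ≤ S := by
    have key : ∀ k : Fin n, T k k k ^ 2 + (∑ i ∈ univ.erase k, T i i k ^ 2)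
        + (∑ i ∈ univ.erase k, T k k i ^ 2) + (∑ i ∈ univ.erase k, T k k i ^ 2)
        ≤ ∑ i, ∑ j, T i j k ^ 2 := by
      intro k
      have hsplit : (∑ i : Fin n, ∑ j, T i j k ^ 2)
          = (∑ j, T k j k ^ 2) + ∑ i ∈ univ.erase k, ∑ j, T i j k ^ 2 := by
        rw [← Finset.add_sum_erase _ _ (Finset.mem_univ k)]
      rw [hsplit]
      have h1 : T k k k ^ 2 + (∑ i ∈ univ.erase k, T k k i ^ 2) ≤ ∑ j, T k j k ^ 2 := by
        rw [← Finset.add_sum_erase _ (fun j => T k j k ^ 2) (Finset.mem_univ k)]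
        apply add_le_add_right
        apply le_of_eq
        apply Finset.sum_congr rfl
        intro i _
        rw [hsymm' k i k]
      have h2 : (∑ i ∈ univ.erase k, T i i k ^ 2) + (∑ i ∈ univ.erase k, T k k i ^ 2)
          ≤ ∑ i ∈ univ.erase k, ∑ j, T i j k ^ 2 := by
        rw [← Finset.sum_add_distrib]
        apply Finset.sum_le_sum
        intro i hi
        have hik : i ≠ k := Finset.ne_of_mem_erase hi
        have hpair : T i i k ^ 2 + T k k i ^ 2 = ∑ j ∈ ({i, k} : Finset (Fin n)), T i j k ^ 2 := by
          rw [Finset.sum_pair hik]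
          have : T i k k = T k k i := by rw [hsymm i k k, hsymm' k i k]
          rw [this]
        rw [hpair]
        apply Finset.sum_le_sum_of_subset_of_nonneg (Finset.subset_univ _)
        intro j _ _; positivity
      linarith
    have hsum := Finset.sum_le_sum (fun k (_ : k ∈ univ) => key k)
    rw [← hS] at hsum
    simp only [Finset.sum_add_distrib] at hsum
    rw [← hP, relabel (fun k i => T k k i ^ 2), ← hBs] at hsum
    linarith
  -- Step 3: P ≤ c * Hs + c * Bs
  have step3 : P ≤ c * Hs + c * Bs := by
    have point : ∀ k : Fin n, T k k k ^ 2 ≤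
        c * (∑ i, T i i k) ^ 2 + c * ∑ i ∈ univ.erase k, T i i k ^ 2 := by
      intro k
      have hH : (∑ i, T i i k) = T k k k + ∑ i ∈ univ.erase k, T i i k := by
        rw [← Finset.add_sum_erase _ _ (Finset.mem_univ k)]
      set s : ℝ := ∑ i ∈ univ.erase k, T i i k with hs
      set B : ℝ := ∑ i ∈ univ.erase k, T i i k ^ 2 with hB
      have hcard : (univ.erase k).card = n - 1 := by
        rw [Finset.card_erase_of_mem (Finset.mem_univ k), Finset.card_univ, Fintype.card_fin]
      have hsB : s ^ 2 ≤ ((n:ℝ) - 1) * B := by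
        have h := sq_sum_le_card_mul_sum_sq (s := univ.erase k) (f := fun i => T i i k)
        rw [hcard] at h
        have hcast : ((n - 1 : ℕ) : ℝ) = (n:ℝ) - 1 := by
          have h1 : (1:ℕ) ≤ n := hn
          push_cast [h1]; ring
        rw [hcast] at h
        exact h
      have hBnn : (0:ℝ) ≤ B := by positivity
      rw [hH]
      rcases eq_or_lt_of_le hc with h1 | h1
      · have hs0 : s ^ 2 ≤ 0 := by rw [hcdef] at h1; nlinarith [hsB]
        have hse : s = 0 := by nlinarith [sq_nonneg s]
        rw [hse, add_zero]
        have e1 : 1 * T k k k ^ 2 ≤ c * T k k k ^ 2 :=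
          mul_le_mul_of_nonneg_right hc (sq_nonneg _)
        have e2 : 0 ≤ c * B := mul_nonneg (by linarith) hBnn
        linarith
      · have hc1 : (0:ℝ) < c - 1 := by linarith
        have hcpos : (0:ℝ) < c := by linarith
        have key2 : (c - 1) * (T k k k) ^ 2
            ≤ c * (c - 1) * (T k k k + s) ^ 2 + c * s ^ 2 := by
          nlinarith [sq_nonneg ((c - 1) * (T k k k + s) + s)]
        have hsB' : s ^ 2 ≤ (c - 1) * B := by rw [hcdef]; exact hsB
        have h2 : c * s ^ 2 ≤ c * ((c - 1) * B) :=
          mul_le_mul_of_nonneg_left hsB' hcpos.le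
        nlinarith [key2, h2, mul_pos hcpos hc1, sq_nonneg (T k k k + s)]
    calc P ≤ ∑ k, (c * (∑ i, T i i k) ^ 2 + c * ∑ i ∈ univ.erase k, T i i k ^ 2) :=
          Finset.sum_le_sum (fun k _ => point k)
      _ = c * Hs + c * Bs := by
          rw [Finset.sum_add_distrib, ← Finset.mul_sum, ← Finset.mul_sum]
  -- Combine
  have hpos : (0:ℝ) < c + 1 := by linarith
  have hcoef : (0:ℝ) < 1 + 2 / (c + 1) := by positivity
  have main : (1 + 2 / (c + 1)) * A ≤ S + 2 * c / (c + 1) * Hs := by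
    set u : ℝ := 1 / (c + 1) with hudef
    have hu : u * (c + 1) = 1 := by rw [hudef]; field_simp
    have hunn : (0:ℝ) ≤ u := by positivity
    have d1 : 2 / (c + 1) = 2 * u := by rw [hudef]; ring
    have d2 : 2 * c / (c + 1) = 2 * c * u := by rw [hudef]; ring
    rw [d1, d2]
    have h3 : u * P ≤ u * (c * Hs + c * Bs) := mul_le_mul_of_nonneg_left step3 hunn
    have h4 : (u * (c + 1) - 1) * Bs = 0 := by rw [hu]; ring
    nlinarith [step2, h3, h4, hAPB, hBnonneg, hHnonneg]
  calc (1 + 2 / (c + 1)) * ((∑ k, (∑ i, lam i * T i i k) ^ 2) / (∑ i, lam i ^ 2))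
      ≤ (1 + 2 / (c + 1)) * A := by
        apply mul_le_mul_of_nonneg_left step1 (le_of_lt hcoef)
    _ ≤ S + 2 * c / (c + 1) * Hs := main
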